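/- Let n_1 ≥ n_2 ≥ ... ≥ n_k be positive integers. The Ramsey multiplicity M_k(n_1K_2, ..., n_kK_2), i.e. the minimum over all k-edge-colorings of K_r with r = r(n_1K_2,...,n_kK_2) of the total number of copies of n_iK_2 in color i summed over i, is at most (2n_1)!/(2^{n_1} · n_1!). -/

import Mathlib

open SimpleGraph Function

namespace GR

/-- The set of copies of a graph `H` (assumed without isolated vertices, so a copy is
identified with its edge set) inside the complete graph on `Fin n`. -/
def copies {α : Type} (H : SimpleGraph α) (n : ℕ) : Set (Set (Sym2 (Fin n))) :=
  {S | ∃ f : α → Fin n, Function.Injective f ∧ S = (Sym2.map f) '' H.edgeSet}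

/-- `S` is a monochromatic copy of `H` under the edge-coloring `c`. -/
def IsMonoCopy {α C : Type} (H : SimpleGraph α) {n : ℕ}
    (c : Sym2 (Fin n) → C) (S : Set (Sym2 (Fin n))) : Prop :=
  S ∈ copies H n ∧ ∃ col, ∀ e ∈ S, c e = col

/-- `S` is a rainbow copy of `G` under the edge-coloring `c`. -/
def IsRainbowCopy {α C : Type} (G : SimpleGraph α) {n : ℕ}
    (c : Sym2 (Fin n) → C) (S : Set (Sym2 (Fin n))) : Prop :=
  S ∈ copies G n ∧ Set.InjOn c S

def HasMonoCopy {α C : Type} (H : SimpleGraph α) {n : ℕ} (c : Sym2 (Fin n) → C) : Prop :=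
  ∃ S, IsMonoCopy H c S

def HasRainbowCopy {α C : Type} (G : SimpleGraph α) {n : ℕ} (c : Sym2 (Fin n) → C) : Prop :=
  ∃ S, IsRainbowCopy G c S

/-- The `k`-colored Gallai-Ramsey number `gr_k(G : H)`. -/
noncomputable def gr {α β : Type} (k : ℕ) (G : SimpleGraph α) (H : SimpleGraph β) : ℕ :=
  sInf {n | ∀ c : Sym2 (Fin n) → Fin k, HasRainbowCopy G c ∨ HasMonoCopy H c}

/-- The diagonal `k`-colored Ramsey number `r_k(H)`. -/
noncomputable def ramsey {β : Type} (k : ℕ) (H : SimpleGraph β) : ℕ :=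
  sInf {n | ∀ c : Sym2 (Fin n) → Fin k, HasMonoCopy H c}

/-- The matching with `n` edges, `nK₂`. -/
def nK2 (n : ℕ) : SimpleGraph (Fin n × Fin 2) :=
  SimpleGraph.fromRel (fun a b => a.1 = b.1)

/-- The path on 5 vertices. -/
def P5 : SimpleGraph (Fin 5) := SimpleGraph.pathGraph 5

/-- The star with three leaves. -/
def K13 : SimpleGraph (Fin 1 ⊕ Fin 3) := completeBipartiteGraph (Fin 1) (Fin 3)

/-- The triangle. -/
def K3 : SimpleGraph (Fin 3) := completeGraph (Fin 3)

/-- Number of monochromatic copies of `H` under the coloring `c`. -/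
noncomputable def monoCopyCount {α C : Type} (H : SimpleGraph α) {n : ℕ}
    (c : Sym2 (Fin n) → C) : ℕ :=
  Set.ncard {S | IsMonoCopy H c S}

/-- Number of rainbow copies of `G` under the coloring `c`. -/
noncomputable def rainbowCopyCount {α C : Type} (G : SimpleGraph α) {n : ℕ}
    (c : Sym2 (Fin n) → C) : ℕ :=
  Set.ncard {S | IsRainbowCopy G c S}

/-- The Gallai-Ramsey multiplicity: the minimum, over exact `k`-colorings of the complete
graph on `gr_k(G:H)` vertices, of the number of rainbow copies of `G` plus the number of
monochromatic copies of `H`. -/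
noncomputable def GM {α β : Type} (k : ℕ) (G : SimpleGraph α) (H : SimpleGraph β) : ℕ :=
  sInf {t | ∃ c : Sym2 (Fin (gr k G H)) → Fin k, Surjective c ∧
    t = rainbowCopyCount G c + monoCopyCount H c}

end GR


set_option linter.unusedSectionVars false
set_option linter.unusedVariables false
set_option maxHeartbeats 1000000

namespace CLM

attribute [local instance] Classical.propDecidable

variable {V : Type} [Fintype V] [DecidableEq V]

def IsM (H : SimpleGraph V) (f : V → V) : Prop :=
  Function.Involutive f ∧ ∀ v, f v ≠ v → H.Adj v (f v)

noncomputable def eta (f : V → V) : ℕ :=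
  (Finset.univ.filter (fun v => f v ≠ v)).card

noncomputable def matchFinset (H : SimpleGraph V) : Finset (V → V) :=
  Finset.univ.filter (fun f => IsM H f)

lemma mem_matchFinset {H : SimpleGraph V} {f : V → V} :
    f ∈ matchFinset H ↔ IsM H f := by
  simp [matchFinset]

noncomputable def nu (H : SimpleGraph V) : ℕ := (matchFinset H).sup eta

lemma isM_id (H : SimpleGraph V) : IsM H id := ⟨fun _ => rfl, fun v h => absurd rfl h⟩

lemma exists_max_matching (H : SimpleGraph V) : ∃ f, IsM H f ∧ eta f = nu H := by
  obtain ⟨f, hf, hsup⟩ := Finset.exists_mem_eq_sup (matchFinset H)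
    ⟨id, mem_matchFinset.2 (isM_id H)⟩ eta
  exact ⟨f, mem_matchFinset.1 hf, hsup.symm⟩

lemma eta_le_nu {H : SimpleGraph V} {f : V → V} (hf : IsM H f) : eta f ≤ nu H :=
  Finset.le_sup (mem_matchFinset.2 hf)

lemma nu_mono {H H' : SimpleGraph V} (h : H ≤ H') : nu H ≤ nu H' := by
  apply Finset.sup_le
  intro f hf
  rw [mem_matchFinset] at hf
  exact eta_le_nu ⟨hf.1, fun v hv => h (hf.2 v hv)⟩

private lemma even_aux {f : V → V} (hinv : Function.Involutive f) :
    ∀ C : Finset V, (∀ v ∈ C, f v ≠ v ∧ f v ∈ C) → Even C.card := by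
  intro C
  induction C using Finset.strongInduction with
  | _ C ih =>
    intro hC
    rcases C.eq_empty_or_nonempty with rfl | ⟨v, hv⟩
    · simp
    · have hfv : f v ≠ v := (hC v hv).1
      have hfvC : f v ∈ C := (hC v hv).2
      have hpairsub : ({v, f v} : Finset V) ⊆ C := by
        intro x hx; simp at hx; rcases hx with rfl | rfl <;> assumption
      have hsub : (C \ {v, f v}).card = C.card - 2 := by
        rw [Finset.card_sdiff_of_subset hpairsub, Finset.card_pair (Ne.symm hfv)]
      have hev : Even (C \ {v, f v}).card := by
        apply ih _ (Finset.sdiff_ssubset hpairsub (by simp))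
        intro w hw
        simp only [Finset.mem_sdiff, Finset.mem_insert, Finset.mem_singleton] at hw ⊢
        push_neg at hw
        refine ⟨(hC w hw.1).1, (hC w hw.1).2, fun h => ?_⟩
        rcases h with h | h
        · exact hw.2.2 (by rw [← h, hinv w])
        · exact hw.2.1 (hinv.injective h)
      have h2 : 2 ≤ C.card := by
        calc 2 = ({v, f v} : Finset V).card := (Finset.card_pair (Ne.symm hfv)).symm
        _ ≤ C.card := Finset.card_le_card hpairsub
      obtain ⟨c, hc⟩ := hev
      exact ⟨c + 1, by omega⟩

lemma eta_even {f : V → V} (hinv : Function.Involutive f) : Even (eta f) := by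
  apply even_aux hinv
  intro v hv
  simp only [Finset.mem_filter, Finset.mem_univ, true_and] at hv ⊢
  refine ⟨hv, ?_⟩
  rw [hinv v]
  exact Ne.symm hv

lemma nu_even (H : SimpleGraph V) : Even (nu H) := by
  obtain ⟨f, hf, heta⟩ := exists_max_matching H
  rw [← heta]; exact eta_even hf.1

section Walk

variable (g f : V → V) (u : V)

def alt : ℕ → V
  | 0 => u
  | (n+1) => (if n % 2 = 0 then g else f) (alt n)

variable {g f u}
variable (hgi : Function.Involutive g) (hfi : Function.Involutive f)

local notation "A" => alt g f u

include hgi hfi in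
lemma alt_backward (n : ℕ) : (if n % 2 = 0 then g else f) (A (n+1)) = A n := by
  show (if n % 2 = 0 then g else f) ((if n % 2 = 0 then g else f) (A n)) = A n
  by_cases h : n % 2 = 0 <;> simp [h, hgi _, hfi _]

include hgi hfi in
lemma alt_inj (hu : f u = u) (m : ℕ) (hstop : ∀ j, j < m → A (j+1) ≠ A j) :
    ∀ l' l, l < l' → l' ≤ m → A l ≠ A l' := by
  intro l'
  induction l' using Nat.strong_induction_on with
  | _ l' ih =>
    intro l hll' hl'm heq
    by_cases hpar : l % 2 = l' % 2
    · rcases Nat.eq_zero_or_pos l with rfl | hl0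
      · have hodd : ¬ ((l' - 1) % 2 = 0) := by omega
        have hb := alt_backward (u:=u) hgi hfi (l' - 1)
        rw [if_neg hodd, show l' - 1 + 1 = l' from by omega, ← heq] at hb
        have hb' : A (l' - 1) = u := by rw [← hb]; show f u = u; exact hu
        refine hstop (l'-1) (by omega) ?_
        rw [show l' - 1 + 1 = l' from by omega, hb', ← heq]; rfl
      · have h1 := alt_backward (u:=u) hgi hfi (l - 1)
        have h2 := alt_backward (u:=u) hgi hfi (l' - 1)
        rw [show l - 1 + 1 = l from by omega] at h1
        rw [show l' - 1 + 1 = l' from by omega] at h2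
        have hAA : A (l-1) = A (l'-1) := by
          rw [← h1, ← h2, heq]
          have : (l-1) % 2 = (l'-1) % 2 := by omega
          rw [this]
        exact ih (l'-1) (by omega) (l-1) (by omega) (by omega) hAA
    · have h2 := alt_backward (u:=u) hgi hfi (l' - 1)
      rw [show l' - 1 + 1 = l' from by omega] at h2
      have hAA : A (l+1) = A (l'-1) := by
        show (if l % 2 = 0 then g else f) (A l) = A (l'-1)
        rw [← h2, heq]
        have : l % 2 = (l'-1) % 2 := by omega
        rw [this]
      rcases Nat.lt_trichotomy (l+1) (l'-1) with hc | hc | hc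
      · exact ih (l'-1) (by omega) (l+1) hc (by omega) hAA
      · omega
      · have hll : l' = l + 1 := by omega
        exact hstop l (by omega) (by rw [hAA, hll]; simp)

include hgi hfi in
lemma alt_stop_exists (hu1 : g u ≠ u) (hu : f u = u) : ∃ n, A (n+1) = A n := by
  by_contra hno
  push_neg at hno
  have hinj := alt_inj hgi hfi hu (Fintype.card V + 1) (fun j _ => hno j)
  have : Function.Injective (fun i : Fin (Fintype.card V + 1) => A i.val) := by
    intro a b hab
    by_contra hne
    rcases Nat.lt_or_ge a.val b.val with h | h
    · exact hinj b.val a.val h (by omega) hab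
    · rcases Nat.lt_or_ge b.val a.val with h' | h'
      · exact hinj a.val b.val h' (by omega) hab.symm
      · exact hne (Fin.ext (by omega))
  have := Fintype.card_le_of_injective _ this
  simp at this

end Walk

section Swap

variable {H : SimpleGraph V}

noncomputable def swp (A : ℕ → V) (T : ℕ) (pf : ℕ → ℕ) (φ : V → V) : V → V :=
  fun x => if h : ∃ j, j ≤ T ∧ A j = x then A (pf (Nat.find h)) else φ x

variable {A : ℕ → V} {T : ℕ} {pf : ℕ → ℕ} {φ : V → V}

lemma swp_on (hinj : ∀ l l', l ≤ T → l' ≤ T → A l = A l' → l = l')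
    {j : ℕ} (hj : j ≤ T) : swp A T pf φ (A j) = A (pf j) := by
  have h : ∃ j', j' ≤ T ∧ A j' = A j := ⟨j, hj, rfl⟩
  rw [swp, dif_pos h]
  have hspec := Nat.find_spec h
  have : Nat.find h = j := hinj _ _ hspec.1 hj hspec.2
  rw [this]

lemma swp_off {x : V} (hx : ∀ j, j ≤ T → A j ≠ x) : swp A T pf φ x = φ x := by
  rw [swp, dif_neg]
  rintro ⟨j, hj, hAj⟩
  exact hx j hj hAj

lemma eta_split (φ : V → V) (A : ℕ → V) (T : ℕ)
    (hinj : ∀ l l', l ≤ T → l' ≤ T → A l = A l' → l = l') :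
    eta φ = ((Finset.range (T+1)).filter (fun j => φ (A j) ≠ A j)).card
      + (Finset.univ.filter (fun x => φ x ≠ x ∧ ∀ j, j ≤ T → A j ≠ x)).card := by
  have hsplit : (Finset.univ.filter (fun x => φ x ≠ x))
      = (Finset.univ.filter (fun x => φ x ≠ x ∧ ∃ j, j ≤ T ∧ A j = x))
        ∪ (Finset.univ.filter (fun x => φ x ≠ x ∧ ∀ j, j ≤ T → A j ≠ x)) := by
    ext x
    simp only [Finset.mem_filter, Finset.mem_union, Finset.mem_univ, true_and]
    constructor
    · intro h
      by_cases hx : ∃ j, j ≤ T ∧ A j = x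
      · exact Or.inl ⟨h, hx⟩
      · push_neg at hx
        exact Or.inr ⟨h, hx⟩
    · rintro (⟨h, _⟩ | ⟨h, _⟩) <;> exact h
  have hdisj : Disjoint (Finset.univ.filter (fun x => φ x ≠ x ∧ ∃ j, j ≤ T ∧ A j = x))
      (Finset.univ.filter (fun x => φ x ≠ x ∧ ∀ j, j ≤ T → A j ≠ x)) := by
    rw [Finset.disjoint_left]
    intro x hx hx'
    simp only [Finset.mem_filter] at hx hx'
    obtain ⟨j, hj, hAj⟩ := hx.2.2
    exact hx'.2.2 j hj hAj
  have himg : (Finset.univ.filter (fun x => φ x ≠ x ∧ ∃ j, j ≤ T ∧ A j = x))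
      = ((Finset.range (T+1)).filter (fun j => φ (A j) ≠ A j)).image A := by
    ext x
    simp only [Finset.mem_filter, Finset.mem_image, Finset.mem_univ, true_and,
      Finset.mem_range]
    constructor
    · rintro ⟨hmv, j, hj, rfl⟩
      exact ⟨j, ⟨by omega, hmv⟩, rfl⟩
    · rintro ⟨j, ⟨hj, hmv⟩, rfl⟩
      exact ⟨hmv, j, by omega, rfl⟩
  have hcard : (((Finset.range (T+1)).filter (fun j => φ (A j) ≠ A j)).image A).card
      = ((Finset.range (T+1)).filter (fun j => φ (A j) ≠ A j)).card := by
    apply Finset.card_image_of_injOn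
    intro a ha b hb hab
    simp only [Finset.mem_coe, Finset.mem_filter, Finset.mem_range] at ha hb
    exact hinj a b (by omega) (by omega) hab
  rw [eta, hsplit, Finset.card_union_of_disjoint hdisj, himg, hcard]

lemma swp_good
    (hφ : IsM H φ)
    (hinj : ∀ l l', l ≤ T → l' ≤ T → A l = A l' → l = l')
    (hpfle : ∀ j, j ≤ T → pf j ≤ T)
    (hpfinv : ∀ j, j ≤ T → pf (pf j) = j)
    (hclosed : ∀ j, j ≤ T → φ (A j) = A j ∨ ∃ j', j' ≤ T ∧ φ (A j) = A j')
    (hadj : ∀ j, j ≤ T → pf j ≠ j → H.Adj (A j) (A (pf j))) :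
    IsM H (swp A T pf φ)
    ∧ eta (swp A T pf φ) + ((Finset.range (T+1)).filter (fun j => φ (A j) ≠ A j)).card
        = eta φ + ((Finset.range (T+1)).filter (fun j => pf j ≠ j)).card := by
  have hoffclosed : ∀ x, (∀ j, j ≤ T → A j ≠ x) → (∀ j, j ≤ T → A j ≠ φ x) := by
    intro x hx j hj hAj
    have hxx : φ (A j) = x := by rw [hAj, hφ.1 x]
    rcases hclosed j hj with h | ⟨j', hj', h⟩
    · rw [h] at hxx; exact hx j hj hxx
    · rw [h] at hxx; exact hx j' hj' hxx
  have hswp_off_pt : ∀ x, (∀ j, j ≤ T → A j ≠ x) → swp A T pf φ x = φ x :=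
    fun x hx => swp_off hx
  have hinvol : Function.Involutive (swp A T pf φ) := by
    intro x
    by_cases hx : ∃ j, j ≤ T ∧ A j = x
    · obtain ⟨j, hj, rfl⟩ := hx
      rw [swp_on hinj hj, swp_on hinj (hpfle j hj), hpfinv j hj]
    · push_neg at hx
      rw [hswp_off_pt x hx, hswp_off_pt (φ x) (hoffclosed x hx), hφ.1 x]
  have hmoved : ∀ j, j ≤ T → (swp A T pf φ (A j) ≠ A j ↔ pf j ≠ j) := by
    intro j hj
    rw [swp_on hinj hj]
    constructor
    · intro h hpf; exact h (by rw [hpf])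
    · intro h hA; exact h (hinj _ _ (hpfle j hj) hj hA)
  refine ⟨⟨hinvol, ?_⟩, ?_⟩
  · intro v hv
    by_cases hx : ∃ j, j ≤ T ∧ A j = v
    · obtain ⟨j, hj, rfl⟩ := hx
      have hpf : pf j ≠ j := (hmoved j hj).1 hv
      rw [swp_on hinj hj]
      exact hadj j hj hpf
    · push_neg at hx
      rw [hswp_off_pt v hx] at hv ⊢
      exact hφ.2 v hv
  · rw [eta_split (swp A T pf φ) A T hinj, eta_split φ A T hinj]
    have h1 : ((Finset.range (T+1)).filter (fun j => swp A T pf φ (A j) ≠ A j))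
        = ((Finset.range (T+1)).filter (fun j => pf j ≠ j)) := by
      apply Finset.filter_congr
      intro j hj
      simp only [Finset.mem_range] at hj
      exact hmoved j (by omega)
    have h2 : (Finset.univ.filter (fun x => swp A T pf φ x ≠ x ∧ ∀ j, j ≤ T → A j ≠ x))
        = (Finset.univ.filter (fun x => φ x ≠ x ∧ ∀ j, j ≤ T → A j ≠ x)) := by
      apply Finset.filter_congr
      intro x _
      constructor
      · rintro ⟨hmv, hoff⟩; exact ⟨by rwa [hswp_off_pt x hoff] at hmv, hoff⟩
      · rintro ⟨hmv, hoff⟩; exact ⟨by rwa [hswp_off_pt x hoff], hoff⟩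
    rw [h1, h2]
    omega

end Swap

section Endgame

variable {H : SimpleGraph V} {g f : V → V} {u : V}

lemma walk_endgame (hg : IsM H g) (hf : IsM H f)
    (hgmax : eta g = nu H) (hfmax : eta f = nu H)
    (huf : f u = u) (hug : g u ≠ u) :
    ∃ t, t ≠ u ∧ g t = t ∧ f t ≠ t
      ∧ (∃ g', IsM H g' ∧ eta g' = nu H ∧ g' u = u ∧ ∀ x, g x = x → x ≠ t → g' x = x)
      ∧ (∃ f', IsM H f' ∧ eta f' = nu H ∧ f' t = t ∧ ∀ x, f x = x → x ≠ u → f' x = x) := by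
  classical
  have hgi := hg.1
  have hfi := hf.1
  obtain hex := alt_stop_exists (g := g) (f := f) (u := u) hgi hfi hug huf
  set A : ℕ → V := alt g f u with hA
  set T : ℕ := Nat.find hex with hTdef
  have hstopT : A (T+1) = A T := Nat.find_spec hex
  have hstop : ∀ j, j < T → A (j+1) ≠ A j := fun j hj => Nat.find_min hex hj
  have hA1 : A 1 = g u := by
    show (if 0 % 2 = 0 then g else f) (A 0) = g u
    simp [hA, alt]
  have hT1 : 1 ≤ T := by
    by_contra hc
    have hT0 : T = 0 := by omega
    have := hstopT
    rw [hT0] at this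
    rw [hA1] at this
    exact hug (by simpa [hA, alt] using this)
  have hinj : ∀ l l', l ≤ T → l' ≤ T → A l = A l' → l = l' := by
    intro l l' hl hl' heq
    rcases Nat.lt_trichotomy l l' with h | h | h
    · exact absurd heq (alt_inj hgi hfi huf T hstop l' l h hl')
    · exact h
    · exact absurd heq.symm (alt_inj hgi hfi huf T hstop l l' h hl)
  have lf1 : ∀ j, j % 2 = 1 → f (A j) = A (j+1) := by
    intro j hj
    show f (A j) = (if j % 2 = 0 then g else f) (A j)
    rw [if_neg (by omega)]
  have lf2 : ∀ j, j % 2 = 0 → 0 < j → f (A j) = A (j-1) := by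
    intro j hj hj0
    have hb := alt_backward (g := g) (f := f) (u := u) hgi hfi (j-1)
    rw [if_neg (by omega), show j - 1 + 1 = j from by omega] at hb
    exact hb
  have lg1 : ∀ j, j % 2 = 0 → g (A j) = A (j+1) := by
    intro j hj
    show g (A j) = (if j % 2 = 0 then g else f) (A j)
    rw [if_pos hj]
  have lg2 : ∀ j, j % 2 = 1 → g (A j) = A (j-1) := by
    intro j hj
    have hb := alt_backward (g := g) (f := f) (u := u) hgi hfi (j-1)
    rw [if_pos (by omega), show j - 1 + 1 = j from by omega] at hb
    exact hb
  have hu0 : A 0 = u := rfl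
  have hgedge : ∀ j, j % 2 = 0 → j < T → H.Adj (A j) (A (j+1)) := by
    intro j hp hlt
    rw [← lg1 j hp]
    apply hg.2
    rw [lg1 j hp]
    exact hstop j hlt
  have hfedge : ∀ j, j % 2 = 1 → j < T → H.Adj (A j) (A (j+1)) := by
    intro j hp hlt
    rw [← lf1 j hp]
    apply hf.2
    rw [lf1 j hp]
    exact hstop j hlt
  by_cases hTpar : T % 2 = 0
  · -- T even : main case
    have hT2 : 2 ≤ T := by omega
    have lg3 : g (A T) = A T := by
      have h := hstopT
      rw [show A (T+1) = (if T % 2 = 0 then g else f) (A T) from rfl, if_pos hTpar] at h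
      exact h
    have hgmv : ∀ j, j < T → g (A j) ≠ A j := by
      intro j hlt
      by_cases hp : j % 2 = 0
      · rw [lg1 j hp]
        intro heq
        have := hinj (j+1) j (by omega) (by omega) heq
        omega
      · rw [lg2 j (by omega)]
        intro heq
        have := hinj (j-1) j (by omega) (by omega) heq
        omega
    have hfmv : ∀ j, 0 < j → j ≤ T → f (A j) ≠ A j := by
      intro j hj0 hjT
      by_cases hp : j % 2 = 0
      · rw [lf2 j hp hj0]
        intro heq
        have := hinj (j-1) j (by omega) (by omega) heq
        omega
      · have hjlt : j < T := by omega
        rw [lf1 j (by omega)]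
        intro heq
        have := hinj (j+1) j (by omega) (by omega) heq
        omega
    refine ⟨A T, ?_, lg3, ?_, ?_, ?_⟩
    · intro h
      have := hinj T 0 le_rfl (by omega) (by rw [h, hu0])
      omega
    · exact hfmv T (by omega) le_rfl
    · -- outcome 1 : g-switch freeing u
      set pf2 : ℕ → ℕ := fun j => if j = 0 then 0 else (if j % 2 = 0 then j-1 else j+1) with hpf2
      have hv0 : pf2 0 = 0 := by simp [hpf2]
      have hve : ∀ j, j ≠ 0 → j % 2 = 0 → pf2 j = j - 1 := by
        intro j h1 h2
        simp only [hpf2]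
        rw [if_neg h1, if_pos h2]
      have hvo : ∀ j, j % 2 = 1 → pf2 j = j + 1 := by
        intro j h2
        simp only [hpf2]
        rw [if_neg (by omega), if_neg (by omega)]
      have hpfle : ∀ j, j ≤ T → pf2 j ≤ T := by
        intro j hj
        by_cases h0 : j = 0
        · subst h0; rw [hv0]; omega
        · by_cases hp : j % 2 = 0
          · rw [hve j h0 hp]; omega
          · rw [hvo j (by omega)]; omega
      have hpfinv : ∀ j, j ≤ T → pf2 (pf2 j) = j := by
        intro j hj
        by_cases h0 : j = 0
        · subst h0; rw [hv0, hv0]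
        · by_cases hp : j % 2 = 0
          · rw [hve j h0 hp, hvo (j-1) (by omega)]; omega
          · rw [hvo j (by omega), hve (j+1) (by omega) (by omega)]; omega
      have hclosed : ∀ j, j ≤ T → g (A j) = A j ∨ ∃ j', j' ≤ T ∧ g (A j) = A j' := by
        intro j hj
        rcases Nat.lt_or_ge j T with hlt | hge
        · by_cases hp : j % 2 = 0
          · exact Or.inr ⟨j+1, by omega, lg1 j hp⟩
          · exact Or.inr ⟨j-1, by omega, lg2 j (by omega)⟩
        · have hjT : j = T := by omega
          subst hjT
          exact Or.inl lg3
      have hadj : ∀ j, j ≤ T → pf2 j ≠ j → H.Adj (A j) (A (pf2 j)) := by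
        intro j hj hne
        by_cases h0 : j = 0
        · subst h0; rw [hv0] at hne; exact absurd rfl hne
        · by_cases hp : j % 2 = 0
          · rw [hve j h0 hp]
            have := hfedge (j-1) (by omega) (by omega)
            rw [show j - 1 + 1 = j from by omega] at this
            exact this.symm
          · rw [hvo j (by omega)]
            exact hfedge j (by omega) (by omega)
      obtain ⟨hisM, heta⟩ := swp_good hg hinj hpfle hpfinv hclosed hadj
      have hgmoved : ((Finset.range (T+1)).filter (fun j => g (A j) ≠ A j))
          = (Finset.range (T+1)).filter (fun j => j ≠ T) := by
        apply Finset.filter_congr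
        intro j hj
        simp only [Finset.mem_range] at hj
        constructor
        · intro h hjT
          subst hjT
          exact h lg3
        · intro h
          exact hgmv j (by omega)
      have hpf2moved : ((Finset.range (T+1)).filter (fun j => pf2 j ≠ j))
          = (Finset.range (T+1)).filter (fun j => j ≠ 0) := by
        apply Finset.filter_congr
        intro j hj
        simp only [Finset.mem_range] at hj
        constructor
        · intro h h0
          subst h0
          exact h hv0
        · intro h
          by_cases hp : j % 2 = 0
          · rw [hve j h hp]; omega
          · rw [hvo j (by omega)]; omega
      have hcard1 : ((Finset.range (T+1)).filter (fun j => j ≠ T)).card = T := by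
        rw [Finset.filter_ne', Finset.card_erase_of_mem (by simp), Finset.card_range]
        omega
      have hcard2 : ((Finset.range (T+1)).filter (fun j => j ≠ 0)).card = T := by
        rw [Finset.filter_ne', Finset.card_erase_of_mem (by simp), Finset.card_range]
        omega
      rw [hgmoved, hpf2moved, hcard1, hcard2] at heta
      have hetaeq : eta (swp A T pf2 g) = nu H := by omega
      refine ⟨swp A T pf2 g, hisM, hetaeq, ?_, ?_⟩
      · have h0 : swp A T pf2 g (A 0) = A (pf2 0) := swp_on hinj (by omega)
        rw [hu0] at h0
        rw [h0, hv0]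
        exact hu0
      · intro x hgx hxt
        have hoff : ∀ j, j ≤ T → A j ≠ x := by
          intro j hj heq
          rcases Nat.lt_or_ge j T with hlt | hge
          · exact hgmv j hlt (by rw [heq, hgx])
          · have : j = T := by omega
            subst this
            exact hxt heq.symm
        rw [swp_off hoff]
        exact hgx
    · -- outcome 2 : f-switch freeing A T
      set pf3 : ℕ → ℕ := fun j => if j = T then T else (if j % 2 = 0 then j+1 else j-1) with hpf3
      have hv0 : pf3 T = T := by simp [hpf3]
      have hve : ∀ j, j ≠ T → j % 2 = 0 → pf3 j = j + 1 := by
        intro j h1 h2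
        simp only [hpf3]
        rw [if_neg h1, if_pos h2]
      have hvo : ∀ j, j ≠ T → j % 2 = 1 → pf3 j = j - 1 := by
        intro j h1 h2
        simp only [hpf3]
        rw [if_neg h1, if_neg (by omega)]
      have hpfle : ∀ j, j ≤ T → pf3 j ≤ T := by
        intro j hj
        by_cases h0 : j = T
        · subst h0; rw [hv0]
        · by_cases hp : j % 2 = 0
          · rw [hve j h0 hp]; omega
          · rw [hvo j h0 (by omega)]; omega
      have hpfinv : ∀ j, j ≤ T → pf3 (pf3 j) = j := by
        intro j hj
        by_cases h0 : j = T
        · subst h0; rw [hv0, hv0]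
        · by_cases hp : j % 2 = 0
          · rw [hve j h0 hp, hvo (j+1) (by omega) (by omega)]; omega
          · rw [hvo j h0 (by omega), hve (j-1) (by omega) (by omega)]; omega
      have hclosed : ∀ j, j ≤ T → f (A j) = A j ∨ ∃ j', j' ≤ T ∧ f (A j) = A j' := by
        intro j hj
        by_cases h0 : j = 0
        · subst h0
          exact Or.inl (by rw [hu0]; exact huf)
        · by_cases hp : j % 2 = 0
          · exact Or.inr ⟨j-1, by omega, lf2 j hp (by omega)⟩
          · exact Or.inr ⟨j+1, by omega, lf1 j (by omega)⟩
      have hadj : ∀ j, j ≤ T → pf3 j ≠ j → H.Adj (A j) (A (pf3 j)) := by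
        intro j hj hne
        by_cases h0 : j = T
        · subst h0; rw [hv0] at hne; exact absurd rfl hne
        · by_cases hp : j % 2 = 0
          · rw [hve j h0 hp]
            exact hgedge j hp (by omega)
          · rw [hvo j h0 (by omega)]
            have := hgedge (j-1) (by omega) (by omega)
            rw [show j - 1 + 1 = j from by omega] at this
            exact this.symm
      obtain ⟨hisM, heta⟩ := swp_good hf hinj hpfle hpfinv hclosed hadj
      have hfmoved : ((Finset.range (T+1)).filter (fun j => f (A j) ≠ A j))
          = (Finset.range (T+1)).filter (fun j => j ≠ 0) := by
        apply Finset.filter_congr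
        intro j hj
        simp only [Finset.mem_range] at hj
        constructor
        · intro h h0
          subst h0
          rw [hu0] at h
          exact h huf
        · intro h
          exact hfmv j (by omega) (by omega)
      have hpf3moved : ((Finset.range (T+1)).filter (fun j => pf3 j ≠ j))
          = (Finset.range (T+1)).filter (fun j => j ≠ T) := by
        apply Finset.filter_congr
        intro j hj
        simp only [Finset.mem_range] at hj
        constructor
        · intro h hT
          subst hT
          exact h hv0
        · intro h
          by_cases hp : j % 2 = 0
          · rw [hve j h hp]; omega
          · rw [hvo j h (by omega)]; omega
      have hcard1 : ((Finset.range (T+1)).filter (fun j => j ≠ 0)).card = T := by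
        rw [Finset.filter_ne', Finset.card_erase_of_mem (by simp), Finset.card_range]
        omega
      have hcard2 : ((Finset.range (T+1)).filter (fun j => j ≠ T)).card = T := by
        rw [Finset.filter_ne', Finset.card_erase_of_mem (by simp), Finset.card_range]
        omega
      rw [hfmoved, hpf3moved, hcard1, hcard2] at heta
      have hetaeq : eta (swp A T pf3 f) = nu H := by omega
      refine ⟨swp A T pf3 f, hisM, hetaeq, ?_, ?_⟩
      · have hT0 : swp A T pf3 f (A T) = A (pf3 T) := swp_on hinj le_rfl
        rw [hT0, hv0]
      · intro x hfx hxu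
        have hoff : ∀ j, j ≤ T → A j ≠ x := by
          intro j hj heq
          by_cases h0 : j = 0
          · subst h0
            rw [hu0] at heq
            exact hxu heq.symm
          · exact hfmv j (by omega) hj (by rw [heq, hfx])
        rw [swp_off hoff]
        exact hfx
  · -- T odd : augment f, contradiction
    exfalso
    have lf3 : f (A T) = A T := by
      have h := hstopT
      rw [show A (T+1) = (if T % 2 = 0 then g else f) (A T) from rfl, if_neg hTpar] at h
      exact h
    set pf1 : ℕ → ℕ := fun j => if j % 2 = 0 then j+1 else j-1 with hpf1
    have hve : ∀ j, j % 2 = 0 → pf1 j = j + 1 := by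
      intro j h2
      simp only [hpf1]
      rw [if_pos h2]
    have hvo : ∀ j, j % 2 = 1 → pf1 j = j - 1 := by
      intro j h2
      simp only [hpf1]
      rw [if_neg (by omega)]
    have hpfle : ∀ j, j ≤ T → pf1 j ≤ T := by
      intro j hj
      by_cases hp : j % 2 = 0
      · rw [hve j hp]; omega
      · rw [hvo j (by omega)]; omega
    have hpfinv : ∀ j, j ≤ T → pf1 (pf1 j) = j := by
      intro j hj
      by_cases hp : j % 2 = 0
      · rw [hve j hp, hvo (j+1) (by omega)]; omega
      · rw [hvo j (by omega), hve (j-1) (by omega)]; omega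
    have hclosed : ∀ j, j ≤ T → f (A j) = A j ∨ ∃ j', j' ≤ T ∧ f (A j) = A j' := by
      intro j hj
      by_cases h0 : j = 0
      · subst h0
        exact Or.inl (by rw [hu0]; exact huf)
      · by_cases hT : j = T
        · subst hT
          exact Or.inl lf3
        · by_cases hp : j % 2 = 0
          · exact Or.inr ⟨j-1, by omega, lf2 j hp (by omega)⟩
          · exact Or.inr ⟨j+1, by omega, lf1 j (by omega)⟩
    have hadj : ∀ j, j ≤ T → pf1 j ≠ j → H.Adj (A j) (A (pf1 j)) := by
      intro j hj hne
      by_cases hp : j % 2 = 0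
      · rw [hve j hp]
        exact hgedge j hp (by omega)
      · rw [hvo j (by omega)]
        have := hgedge (j-1) (by omega) (by omega)
        rw [show j - 1 + 1 = j from by omega] at this
        exact this.symm
    obtain ⟨hisM, heta⟩ := swp_good hf hinj hpfle hpfinv hclosed hadj
    have hfmv : ∀ j, 0 < j → j < T → f (A j) ≠ A j := by
      intro j hj0 hjT
      by_cases hp : j % 2 = 0
      · rw [lf2 j hp hj0]
        intro heq
        have := hinj (j-1) j (by omega) (by omega) heq
        omega
      · rw [lf1 j (by omega)]
        intro heq
        have := hinj (j+1) j (by omega) (by omega) heq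
        omega
    have hfmoved : ((Finset.range (T+1)).filter (fun j => f (A j) ≠ A j))
        = Finset.Ioo 0 T := by
      ext j
      simp only [Finset.mem_filter, Finset.mem_range, Finset.mem_Ioo]
      constructor
      · rintro ⟨hj, h⟩
        constructor
        · rcases Nat.eq_zero_or_pos j with rfl | h0
          · exact absurd (by rw [hu0]; exact huf) h
          · exact h0
        · rcases Nat.lt_or_ge j T with hlt | hge
          · exact hlt
          · exfalso
            have : j = T := by omega
            subst this
            exact h lf3
      · rintro ⟨h0, hT⟩
        exact ⟨by omega, hfmv j h0 hT⟩
    have hpf1moved : ((Finset.range (T+1)).filter (fun j => pf1 j ≠ j))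
        = Finset.range (T+1) := by
      apply Finset.filter_true_of_mem
      intro j hj
      by_cases hp : j % 2 = 0
      · rw [hve j hp]; omega
      · rw [hvo j (by omega)]; omega
    rw [hfmoved, hpf1moved, Finset.card_range, Nat.card_Ioo] at heta
    have : eta (swp A T pf1 f) ≤ nu H := eta_le_nu hisM
    omega

end Endgame

section Gallai

variable {H : SimpleGraph V}

lemma augment_adj {f : V → V} {u w : V} (hf : IsM H f) (hu : f u = u) (hw : f w = w)
    (huw : u ≠ w) (hadj : H.Adj u w) : eta f + 2 ≤ nu H := by
  classical
  set f' : V → V := fun x => if x = u then w else if x = w then u else f x with hf'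
  have hvu : f' u = w := by simp [hf']
  have hvw : f' w = u := by simp [hf', huw.symm]
  have hvo : ∀ x, x ≠ u → x ≠ w → f' x = f x := by
    intro x h1 h2; simp [hf', h1, h2]
  have hfnu : ∀ x, x ≠ u → x ≠ w → f x ≠ u ∧ f x ≠ w := by
    intro x h1 h2
    constructor
    · intro h; exact h1 (by rw [← hf.1 x, h, hu])
    · intro h; exact h2 (by rw [← hf.1 x, h, hw])
  have hisM : IsM H f' := by
    constructor
    · intro x
      by_cases h1 : x = u
      · subst h1; rw [hvu, hvw]
      · by_cases h2 : x = w
        · subst h2; rw [hvw, hvu]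
        · obtain ⟨ha, hb⟩ := hfnu x h1 h2
          rw [hvo x h1 h2, hvo (f x) ha hb, hf.1 x]
    · intro v hv
      by_cases h1 : v = u
      · subst h1; rw [hvu]; exact hadj
      · by_cases h2 : v = w
        · subst h2; rw [hvw]; exact hadj.symm
        · rw [hvo v h1 h2] at hv ⊢
          exact hf.2 v hv
  have hcard : eta f' = eta f + 2 := by
    have hset : (Finset.univ.filter (fun x => f' x ≠ x))
        = (Finset.univ.filter (fun x => f x ≠ x)) ∪ {u, w} := by
      ext x
      simp only [Finset.mem_filter, Finset.mem_union, Finset.mem_univ, true_and,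
        Finset.mem_insert, Finset.mem_singleton]
      by_cases h1 : x = u
      · subst h1
        simp [hvu, huw, Ne.symm huw, hu]
      · by_cases h2 : x = w
        · subst h2
          simp [hvw, huw, Ne.symm huw, hw]
        · rw [hvo x h1 h2]
          simp [h1, h2]
    have hdisj : Disjoint (Finset.univ.filter (fun x => f x ≠ x)) ({u, w} : Finset V) := by
      rw [Finset.disjoint_right]
      intro x hx hx'
      simp only [Finset.mem_insert, Finset.mem_singleton] at hx
      simp only [Finset.mem_filter] at hx'
      rcases hx with rfl | rfl
      · exact hx'.2 hu
      · exact hx'.2 hw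
    rw [eta, hset, Finset.card_union_of_disjoint hdisj, Finset.card_pair huw]
    rfl
  rw [← hcard]
  exact eta_le_nu hisM

/-- Gallai core : if every vertex is missed by some maximum matching, then no two
vertices exposed by a common maximum matching are connected. -/
lemma no_reachable_exposed
    (hall : ∀ x, ∃ f, IsM H f ∧ eta f = nu H ∧ f x = x) :
    ∀ n (f : V → V) (u w : V), IsM H f → eta f = nu H → f u = u → f w = w → u ≠ w →
      H.Reachable u w → H.dist u w = n → False := by
  intro n
  induction n using Nat.strong_induction_on with
  | _ n ih =>
    intro f u w hf hfmax hu hw huw hreach hdist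
    by_cases hadj : H.Adj u w
    · have := augment_adj hf hu hw huw hadj
      omega
    · have hdpos : 0 < H.dist u w := hreach.pos_dist_of_ne huw
      have hd1 : H.dist u w ≠ 1 := fun h => hadj (SimpleGraph.dist_eq_one_iff_adj.1 h)
      obtain ⟨p, hp⟩ := hreach.exists_walk_length_eq_dist
      -- p : H.Walk u w with length = dist ≥ 2
      cases p with
      | nil => exact absurd rfl huw
      | @cons _ z _ hadj_uz q =>
        have hq : q.length + 1 = H.dist u w := by simpa using hp
        have hzw : H.dist z w ≤ q.length := SimpleGraph.dist_le q
        have hzu : z ≠ u := hadj_uz.ne'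
        have hzwne : z ≠ w := by
          intro h
          subst h
          exact hadj hadj_uz
        by_cases hfz : f z = z
        · exact ih (H.dist z w) (by omega) f z w hf hfmax hfz hw hzwne q.reachable rfl
        · obtain ⟨N, hN, hNmax, hNz⟩ := hall z
          have hNu : N u ≠ u := by
            intro hNu
            have := augment_adj hN hNu hNz hzu.symm hadj_uz
            omega
          obtain ⟨t, htu, hNt, hft, ⟨g', hg', hg'max, hg'u, hg'prop⟩,
              ⟨f', hf', hf'max, hf't, hf'prop⟩⟩ :=
            walk_endgame hN hf hNmax hfmax hu hNu
          by_cases hzt : z = t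
          · -- use f' : max matching exposing t = z and w
            subst hzt
            have hf'w : f' w = w := hf'prop w hw huw.symm
            exact ih (H.dist z w) (by omega) f' z w hf' hf'max hf't hf'w hzwne
              q.reachable rfl
          · -- use g' : exposes u and z, adjacent : contradiction
            have hg'z : g' z = z := hg'prop z hNz hzt
            have := augment_adj hg' hg'u hg'z hzu.symm hadj_uz
            omega

end Gallai

section Count

variable {H : SimpleGraph V}

lemma nu_le_of_adj_mem {S : Finset V} (hadj : ∀ v w, H.Adj v w → v ∈ S) : nu H ≤ S.card := by
  obtain ⟨f, hf, hfmax⟩ := exists_max_matching H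
  rw [← hfmax, eta]
  apply Finset.card_le_card
  intro v hv
  simp only [Finset.mem_filter, Finset.mem_univ, true_and] at hv
  exact hadj v (f v) (hf.2 v hv)

lemma edge_bound (hall : ∀ x, ∃ f, IsM H f ∧ eta f = nu H ∧ f x = x) :
    2 * H.edgeFinset.card ≤ nu H * (nu H + 1) := by
  classical
  obtain ⟨f, hf, hfmax⟩ := exists_max_matching H
  have no2 : ∀ a b, f a = a → f b = b → ¬ H.Adj a b := by
    intro a b ha hb hadj
    have hab : a ≠ b := hadj.ne
    have := augment_adj hf ha hb hab hadj
    omega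
  have uniq : ∀ b a a', f a = a → f a' = a' → H.Adj a b → H.Adj a' b → a = a' := by
    intro b a a' ha ha' hadj hadj'
    by_contra hne
    have hreach : H.Reachable a a' :=
      (SimpleGraph.Walk.cons hadj (SimpleGraph.Walk.cons hadj'.symm SimpleGraph.Walk.nil)).reachable
    exact no_reachable_exposed hall (H.dist a a') f a a' hf hfmax ha ha' hne hreach rfl
  set covered : Finset V := Finset.univ.filter (fun v => f v ≠ v) with hcovdef
  have hcovcard : covered.card = nu H := hfmax
  have hcovmem : ∀ {a b : V}, H.Adj a b → f a = a → b ∈ covered := by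
    intro a b hadj ha
    simp only [hcovdef, Finset.mem_filter, Finset.mem_univ, true_and]
    intro hb
    exact no2 a b ha hb hadj
  set P : Finset (V × V) := Finset.univ.filter (fun p : V × V => H.Adj p.1 p.2) with hPdef
  have hP2e : 2 * H.edgeFinset.card = P.card := by
    rw [hPdef]
    exact SimpleGraph.two_mul_card_edgeFinset H
  set P1 := P.filter (fun p => f p.1 ≠ p.1 ∧ f p.2 ≠ p.2) with hP1
  set P2 := P.filter (fun p => f p.1 = p.1) with hP2
  set P3 := P.filter (fun p => f p.2 = p.2) with hP3
  have hsub : P ⊆ P1 ∪ P2 ∪ P3 := by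
    intro p hp
    simp only [hP1, hP2, hP3, Finset.mem_union, Finset.mem_filter]
    by_cases h1 : f p.1 = p.1
    · exact Or.inl (Or.inr ⟨hp, h1⟩)
    · by_cases h2 : f p.2 = p.2
      · exact Or.inr ⟨hp, h2⟩
      · exact Or.inl (Or.inl ⟨hp, h1, h2⟩)
  have hcard1 : P1.card ≤ nu H * nu H - nu H := by
    rw [← hcovcard, ← Finset.offDiag_card]
    apply Finset.card_le_card
    intro p hp
    simp only [hP1, hPdef, Finset.mem_filter, Finset.mem_univ, true_and] at hp
    obtain ⟨hadj, h1, h2⟩ := hp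
    simp only [Finset.mem_offDiag, hcovdef, Finset.mem_filter, Finset.mem_univ, true_and]
    exact ⟨h1, h2, hadj.ne⟩
  have hcard2 : P2.card ≤ nu H := by
    rw [← hcovcard]
    apply Finset.card_le_card_of_injOn (fun p => p.2)
    · intro p hp
      simp only [hP2, hPdef, Finset.mem_coe, Finset.mem_filter, Finset.mem_univ, true_and] at hp
      exact hcovmem hp.1 hp.2
    · intro p hp q hq heq
      simp only [hP2, hPdef, Finset.mem_coe, Finset.mem_filter, Finset.mem_univ, true_and] at hp hq
      have heq2 : p.2 = q.2 := heq
      have := uniq p.2 p.1 q.1 hp.2 hq.2 hp.1 (heq2 ▸ hq.1)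
      exact Prod.ext this heq2
  have hcard3 : P3.card ≤ nu H := by
    rw [← hcovcard]
    apply Finset.card_le_card_of_injOn (fun p => p.1)
    · intro p hp
      simp only [hP3, hPdef, Finset.mem_coe, Finset.mem_filter, Finset.mem_univ, true_and] at hp
      exact hcovmem hp.1.symm hp.2
    · intro p hp q hq heq
      simp only [hP3, hPdef, Finset.mem_coe, Finset.mem_filter, Finset.mem_univ, true_and] at hp hq
      have heq2 : p.1 = q.1 := heq
      have := uniq p.1 p.2 q.2 hp.2 hq.2 hp.1.symm (heq2 ▸ hq.1.symm)
      exact Prod.ext heq2 this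
  have hPcard : P.card ≤ P1.card + P2.card + P3.card := by
    calc P.card ≤ (P1 ∪ P2 ∪ P3).card := Finset.card_le_card hsub
    _ ≤ (P1 ∪ P2).card + P3.card := Finset.card_union_le _ _
    _ ≤ P1.card + P2.card + P3.card := by
        have := Finset.card_union_le P1 P2
        omega
  have hsq : nu H ≤ nu H * nu H := by nlinarith [Nat.zero_le (nu H)]
  have hgoal : nu H * (nu H + 1) = nu H * nu H + nu H := by ring
  rw [hgoal, hP2e]
  omega

end Count

section Main

variable {k : ℕ}

def cg (c : Sym2 V → Fin k) (i : Fin k) (S : Finset V) : SimpleGraph V where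
  Adj v w := v ≠ w ∧ v ∈ S ∧ w ∈ S ∧ c s(v, w) = i
  symm := by
    constructor
    intro a b h
    refine ⟨h.1.symm, h.2.2.1, h.2.1, ?_⟩
    rw [Sym2.eq_swap]
    exact h.2.2.2
  loopless := ⟨fun a h => h.1 rfl⟩

lemma cg_adj {c : Sym2 V → Fin k} {i : Fin k} {S : Finset V} {a b : V} :
    (cg c i S).Adj a b ↔ a ≠ b ∧ a ∈ S ∧ b ∈ S ∧ c s(a, b) = i := Iff.rfl

lemma cg_mono (c : Sym2 V → Fin k) (i : Fin k) {S S' : Finset V} (h : S ⊆ S') :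
    cg c i S ≤ cg c i S' :=
  fun _ _ hab => ⟨hab.1, h hab.2.1, h hab.2.2.1, hab.2.2.2⟩

theorem main (c : Sym2 V → Fin k) (S : Finset V) :
    2 * S.card ≤ (∑ i, nu (cg c i S)) + (Finset.univ.sup fun i => nu (cg c i S)) + 2 := by
  classical
  induction S using Finset.strongInduction with
  | _ S ih =>
  rcases le_or_gt S.card 1 with hS1 | hS2
  · omega
  · obtain ⟨v₀, hv₀⟩ : S.Nonempty := by rw [← Finset.card_pos]; omega
    rcases Nat.eq_zero_or_pos k with hk0 | hk0
    · subst hk0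
      exact (c s(v₀, v₀)).elim0
    by_contra hctr
    push_neg at hctr
    -- Step 1 : erasing any vertex preserves all matching numbers
    have hpres : ∀ v ∈ S, ∀ i, nu (cg c i (S.erase v)) = nu (cg c i S) := by
      intro v hv i
      by_contra hne
      have hlt : nu (cg c i (S.erase v)) < nu (cg c i S) :=
        lt_of_le_of_ne (nu_mono (cg_mono c i (Finset.erase_subset v S))) hne
      have h2 : nu (cg c i (S.erase v)) + 2 ≤ nu (cg c i S) := by
        obtain ⟨a, ha⟩ := nu_even (cg c i (S.erase v))
        obtain ⟨b, hb⟩ := nu_even (cg c i S)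
        omega
      have heL := ih (S.erase v) (Finset.erase_ssubset hv)
      have hterm : ∑ j ∈ Finset.univ.erase i, nu (cg c j (S.erase v))
          ≤ ∑ j ∈ Finset.univ.erase i, nu (cg c j S) :=
        Finset.sum_le_sum (fun j _ => nu_mono (cg_mono c j (Finset.erase_subset v S)))
      have hsum' : (∑ j, nu (cg c j (S.erase v))) + 2 ≤ ∑ j, nu (cg c j S) := by
        rw [← Finset.sum_erase_add _ _ (Finset.mem_univ i),
          ← Finset.sum_erase_add _ _ (Finset.mem_univ i)]
        omega
      have hsup' : (Finset.univ.sup fun j => nu (cg c j (S.erase v)))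
          ≤ Finset.univ.sup fun j => nu (cg c j S) :=
        Finset.sup_mono_fun (fun j _ => nu_mono (cg_mono c j (Finset.erase_subset v S)))
      rw [Finset.card_erase_of_mem hv] at heL
      omega
    -- Step 2 : every vertex is missed by some maximum matching, in every color
    have hall : ∀ i : Fin k, ∀ x, ∃ f, IsM (cg c i S) f ∧ eta f = nu (cg c i S) ∧ f x = x := by
      intro i x
      by_cases hx : x ∈ S
      · obtain ⟨f, hf, hfeta⟩ := exists_max_matching (cg c i (S.erase x))
        refine ⟨f, ⟨hf.1, fun v hv => cg_mono c i (Finset.erase_subset x S) (hf.2 v hv)⟩,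
          hfeta.trans (hpres x hx i), ?_⟩
        by_contra h
        have := (hf.2 x h).2.1
        simp at this
      · obtain ⟨f, hf, hfeta⟩ := exists_max_matching (cg c i S)
        refine ⟨f, hf, hfeta, ?_⟩
        by_contra h
        exact hx (hf.2 x h).2.1
    set M : ℕ := Finset.univ.sup fun j => nu (cg c j S) with hM
    -- Step 3 : edge bound per color
    have hedge : ∀ i : Fin k, 2 * (cg c i S).edgeFinset.card ≤ nu (cg c i S) * (M + 1) := by
      intro i
      refine (edge_bound (hall i)).trans ?_
      exact Nat.mul_le_mul_left _ (by
        have : nu (cg c i S) ≤ M := Finset.le_sup (f := fun j => nu (cg c j S)) (Finset.mem_univ i)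
        omega)
    -- Step 4 : edges partition the off-diagonal of S
    have hoff : S.offDiag.card = ∑ i : Fin k, ((S.offDiag).filter
        (fun p => c s(p.1, p.2) = i)).card :=
      Finset.card_eq_sum_card_fiberwise (fun p _ => Finset.mem_univ _)
    have hfib : ∀ i : Fin k, ((S.offDiag).filter (fun p => c s(p.1, p.2) = i)).card
        = 2 * (cg c i S).edgeFinset.card := by
      intro i
      rw [SimpleGraph.two_mul_card_edgeFinset]
      congr 1
      ext p
      simp only [Finset.mem_filter, Finset.mem_offDiag, Finset.mem_univ, true_and]
      constructor
      · rintro ⟨⟨h1, h2, h3⟩, h4⟩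
        exact ⟨h3, h1, h2, h4⟩
      · rintro ⟨h3, h1, h2, h4⟩
        exact ⟨⟨h1, h2, h3⟩, h4⟩
    have htotal : S.card * S.card - S.card ≤ (∑ i, nu (cg c i S)) * (M + 1) := by
      rw [← Finset.offDiag_card, hoff]
      calc ∑ i : Fin k, ((S.offDiag).filter (fun p => c s(p.1, p.2) = i)).card
          = ∑ i : Fin k, 2 * (cg c i S).edgeFinset.card := by
            exact Finset.sum_congr rfl (fun i _ => hfib i)
        _ ≤ ∑ i : Fin k, nu (cg c i S) * (M + 1) :=
            Finset.sum_le_sum (fun i _ => hedge i)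
        _ = (∑ i, nu (cg c i S)) * (M + 1) := (Finset.sum_mul _ _ _).symm
    -- Step 5 : M ≤ |S| and final arithmetic contradiction
    have hMS : M ≤ S.card := by
      apply Finset.sup_le
      intro i _
      exact nu_le_of_adj_mem (fun v w hadj => hadj.2.1)
    set n := S.card with hn
    set Sig := ∑ i, nu (cg c i S) with hSig
    have hnn : n ≤ n * n := Nat.le_mul_of_pos_left n (by omega)
    have hz1 : (n : ℤ) * n - n ≤ Sig * (M + 1) := by
      have := htotal
      zify [hnn] at this
      exact this
    have hz2 : (Sig : ℤ) + M + 3 ≤ 2 * n := by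
      have : Sig + M + 2 + 1 ≤ 2 * n := hctr
      push_cast
      omega
    have hz3 : (M : ℤ) ≤ n := by exact_mod_cast hMS
    have hz4 : (2 : ℤ) ≤ n := by exact_mod_cast hS2
    have hz5 : (0 : ℤ) ≤ Sig := by positivity
    have hz6 : (0 : ℤ) ≤ M := by positivity
    nlinarith [sq_nonneg (2 * ((n : ℤ) - M) - 3), mul_le_mul_of_nonneg_right hz2 (by omega : (0:ℤ) ≤ (M:ℤ) + 1)]

end Main

end CLM

namespace CLM

open GR

attribute [local instance] Classical.propDecidable

lemma fin2_cases (t : Fin 2) : t = 0 ∨ t = 1 := by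
  rcases t with ⟨tv, htv⟩
  have h01 : tv = 0 ∨ tv = 1 := by omega
  rcases h01 with h | h
  · exact Or.inl (Fin.ext h)
  · exact Or.inr (Fin.ext h)

lemma nK2_edge {n : ℕ} {e : Sym2 (Fin n × Fin 2)} :
    e ∈ (nK2 n).edgeSet ↔ ∃ j : Fin n, e = s((j, 0), (j, 1)) := by
  induction e using Sym2.ind with
  | _ a b =>
    rw [SimpleGraph.mem_edgeSet]
    constructor
    · intro hadj
      have h1 : a ≠ b ∧ (a.1 = b.1 ∨ b.1 = a.1) := hadj
      have hfst : a.1 = b.1 := by rcases h1.2 with h | h; exact h; exact h.symm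
      have hsnd : a.2 ≠ b.2 := by
        intro h
        exact h1.1 (Prod.ext hfst h)
      refine ⟨a.1, ?_⟩
      have ha2 : a.2 = 0 ∨ a.2 = 1 := by omega
      rcases ha2 with h2 | h2
      · have hb2 : b.2 = 1 := by omega
        rw [show a = (a.1, (0 : Fin 2)) from Prod.ext rfl h2,
          show b = (a.1, (1 : Fin 2)) from Prod.ext hfst.symm hb2]
      · have hb2 : b.2 = 0 := by omega
        rw [show a = (a.1, (1 : Fin 2)) from Prod.ext rfl h2,
          show b = (a.1, (0 : Fin 2)) from Prod.ext hfst.symm hb2]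
        rw [Sym2.eq_swap]
    · rintro ⟨j, hj⟩
      have hadj01 : (nK2 n).Adj (j, 0) (j, 1) := by
        constructor
        · intro h
          have := congrArg Prod.snd h
          simp at this
        · exact Or.inl rfl
      rcases Sym2.eq_iff.1 hj with ⟨ha, hb⟩ | ⟨ha, hb⟩
      · rw [ha, hb]; exact hadj01
      · rw [ha, hb]; exact hadj01.symm

lemma copy_of_nu {N : ℕ} {k : ℕ} {c : Sym2 (Fin N) → Fin k} {i : Fin k} {n : ℕ}
    (hn : 0 < n) {f : Fin N → Fin N} (hf : IsM (cg c i Finset.univ) f)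
    (heta : 2 * n ≤ eta f) :
    ∃ S ∈ copies (nK2 n) N, ∀ e ∈ S, c e = i := by
  classical
  set covered : Finset (Fin N) := Finset.univ.filter (fun v => f v ≠ v) with hcov
  have hcovmem : ∀ v, v ∈ covered ↔ f v ≠ v := by
    intro v; simp [hcov]
  set Lo : Finset (Fin N) := covered.filter (fun v => v < f v) with hLo
  set Hi : Finset (Fin N) := covered.filter (fun v => f v < v) with hHi
  have hcovsplit : covered = Lo ∪ Hi := by
    ext v
    simp only [hLo, hHi, Finset.mem_union, Finset.mem_filter]
    constructor
    · intro hv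
      rcases lt_or_gt_of_ne (Ne.symm ((hcovmem v).1 hv)) with h | h
      · exact Or.inl ⟨hv, h⟩
      · exact Or.inr ⟨hv, h⟩
    · rintro (⟨hv, _⟩ | ⟨hv, _⟩) <;> exact hv
  have hdisj : Disjoint Lo Hi := by
    rw [Finset.disjoint_left]
    intro v hv hv'
    simp only [hLo, hHi, Finset.mem_filter] at hv hv'
    exact absurd (hv.2.trans hv'.2) (lt_irrefl v)
  have himg : Hi = Lo.image f := by
    ext w
    simp only [hLo, hHi, Finset.mem_filter, Finset.mem_image]
    constructor
    · intro ⟨hw, hlt⟩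
      refine ⟨f w, ⟨?_, ?_⟩, hf.1 w⟩
      · rw [hcovmem] at hw ⊢
        rw [hf.1 w]
        exact Ne.symm hw
      · rw [hf.1 w]
        exact hlt
    · rintro ⟨v, ⟨hv, hlt⟩, rfl⟩
      constructor
      · rw [hcovmem] at hv ⊢
        rw [hf.1 v]
        exact Ne.symm hv
      · rw [hf.1 v]
        exact hlt
  have hLocard : 2 * Lo.card = eta f := by
    have h1 : covered.card = Lo.card + Hi.card := by
      rw [hcovsplit, Finset.card_union_of_disjoint hdisj]
    have h2 : Hi.card = Lo.card := by
      rw [himg]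
      apply Finset.card_image_of_injOn
      intro a _ b _ hab
      exact hf.1.injective hab
    have h3 : covered.card = eta f := rfl
    omega
  have hLon : n ≤ Lo.card := by omega
  set l := Lo.orderEmbOfCardLe hLon with hl
  have hlmem : ∀ j : Fin n, l j ∈ Lo := fun j => Finset.orderEmbOfCardLe_mem Lo hLon j
  have hlLo : ∀ j : Fin n, l j < f (l j) := by
    intro j
    have := hlmem j
    simp only [hLo, Finset.mem_filter] at this
    exact this.2
  set F : Fin n × Fin 2 → Fin N := fun p => if p.2 = 0 then l p.1 else f (l p.1) with hF
  have hF0 : ∀ j : Fin n, F (j, 0) = l j := fun j => rfl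
  have hF1 : ∀ j : Fin n, F (j, 1) = f (l j) := fun j => rfl
  have hFinj : Function.Injective F := by
    rintro ⟨j, t⟩ ⟨j', t'⟩ heq
    have ht : t = 0 ∨ t = 1 := by omega
    have ht' : t' = 0 ∨ t' = 1 := by omega
    rcases ht with rfl | rfl <;> rcases ht' with rfl | rfl
    · have heq' : l j = l j' := by rw [← hF0 j, ← hF0 j']; exact heq
      rw [l.injective heq']
    · have heq' : l j = f (l j') := by rw [← hF0 j, ← hF1 j']; exact heq
      exfalso
      have h1 : l j < f (l j) := hlLo j
      have h2 : l j' < f (l j') := hlLo j'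
      have hfx : f (l j) = l j' := by rw [heq', hf.1]
      rw [hfx] at h1
      rw [← heq'] at h2
      exact absurd (h1.trans h2) (lt_irrefl _)
    · have heq' : f (l j) = l j' := by rw [← hF1 j, ← hF0 j']; exact heq
      exfalso
      have h1 : l j < f (l j) := hlLo j
      have h2 : l j' < f (l j') := hlLo j'
      have hfx : f (l j') = l j := by rw [← heq', hf.1]
      rw [heq'] at h1
      rw [hfx] at h2
      exact absurd (h1.trans h2) (lt_irrefl _)
    · have heq' : f (l j) = f (l j') := by rw [← hF1 j, ← hF1 j']; exact heq
      rw [l.injective (hf.1.injective heq')]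
  refine ⟨Sym2.map F '' (nK2 n).edgeSet, ⟨F, hFinj, rfl⟩, ?_⟩
  rintro e ⟨e₀, he₀, rfl⟩
  obtain ⟨j, rfl⟩ := nK2_edge.1 he₀
  rw [Sym2.map_pair_eq, hF0, hF1]
  have hcov_lj : f (l j) ≠ l j := Ne.symm (ne_of_lt (hlLo j))
  have hadj := hf.2 (l j) hcov_lj
  exact hadj.2.2.2

end CLM



namespace CLF

open GR CLM Nat

attribute [local instance] Classical.propDecidable

variable {k : ℕ}

/-- block sizes : block 0 has size `2 n₀`, block `i` has size `m i - 1`. -/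
def szN (m : Fin k → ℕ) (n₀ j : ℕ) : ℕ :=
  if h : j < k then (if j = 0 then 2 * n₀ else m ⟨j, h⟩ - 1) else 0

def offN (m : Fin k → ℕ) (n₀ i : ℕ) : ℕ := ∑ j ∈ Finset.range i, szN m n₀ j

lemma offN_zero (m : Fin k → ℕ) (n₀ : ℕ) : offN m n₀ 0 = 0 := by simp [offN]

lemma offN_succ (m : Fin k → ℕ) (n₀ i : ℕ) :
    offN m n₀ (i + 1) = offN m n₀ i + szN m n₀ i := Finset.sum_range_succ _ _

lemma offN_mono (m : Fin k → ℕ) (n₀ : ℕ) {a b : ℕ} (h : a ≤ b) :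
    offN m n₀ a ≤ offN m n₀ b :=
  Finset.sum_le_sum_of_subset (Finset.range_subset_range.2 h)

lemma offN_total (hk : 0 < k) (m : Fin k → ℕ) (hpos : ∀ i, 0 < m i) :
    offN m (m ⟨0, hk⟩) k = m ⟨0, hk⟩ + 1 + ∑ i, (m i - 1) := by
  have h1 : offN m (m ⟨0, hk⟩) k = ∑ i : Fin k, szN m (m ⟨0, hk⟩) i.val := by
    rw [offN, ← Fin.sum_univ_eq_sum_range]
  have h2 : ∀ i : Fin k, szN m (m ⟨0, hk⟩) i.val
      = if i = ⟨0, hk⟩ then 2 * m ⟨0, hk⟩ else m i - 1 := by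
    intro i
    rw [szN, dif_pos i.isLt]
    by_cases h : i = ⟨0, hk⟩
    · rw [if_pos h, if_pos (by rw [h])]
    · rw [if_neg h, if_neg (fun hv => h (Fin.ext hv))]
  rw [h1, Finset.sum_congr rfl (fun i _ => h2 i)]
  rw [← Finset.add_sum_erase _ _ (Finset.mem_univ ⟨0, hk⟩),
    ← Finset.add_sum_erase _ (fun i => m i - 1) (Finset.mem_univ ⟨0, hk⟩)]
  rw [if_pos rfl]
  have h3 : ∑ i ∈ Finset.univ.erase ⟨0, hk⟩, (if i = ⟨0, hk⟩ then 2 * m ⟨0, hk⟩ else m i - 1)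
      = ∑ i ∈ Finset.univ.erase ⟨0, hk⟩, (m i - 1) := by
    apply Finset.sum_congr rfl
    intro i hi
    rw [if_neg (Finset.ne_of_mem_erase hi)]
  rw [h3]
  have := hpos ⟨0, hk⟩
  omega

section Coloring

variable (hk : 0 < k) (m : Fin k → ℕ) (R : ℕ)

/-- the block of a vertex : the largest `i` whose block starts at or before `v`. -/
noncomputable def col (v : Fin R) : Fin k :=
  (Finset.univ.filter fun i : Fin k => offN m (m ⟨0, hk⟩) i.val ≤ v.val).max'
    ⟨⟨0, hk⟩, by simp [offN_zero]⟩

noncomputable def cc : Sym2 (Fin R) → Fin k :=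
  Sym2.lift ⟨fun a b => max (col hk m R a) (col hk m R b), fun a b => max_comm _ _⟩

lemma cc_mk (a b : Fin R) : cc hk m R s(a, b) = max (col hk m R a) (col hk m R b) := rfl

lemma col_le (v : Fin R) : offN m (m ⟨0, hk⟩) (col hk m R v).val ≤ v.val := by
  have := Finset.max'_mem (Finset.univ.filter fun i : Fin k =>
    offN m (m ⟨0, hk⟩) i.val ≤ v.val) ⟨⟨0, hk⟩, by simp [offN_zero]⟩
  simpa [col] using (Finset.mem_filter.1 this).2

lemma col_max (v : Fin R) (i : Fin k) (h : offN m (m ⟨0, hk⟩) i.val ≤ v.val) :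
    i ≤ col hk m R v :=
  Finset.le_max' _ i (by simp [h])

lemma col_ub (hpos : ∀ i, 0 < m i) (hR : R ≤ offN m (m ⟨0, hk⟩) k) (v : Fin R) :
    v.val < offN m (m ⟨0, hk⟩) ((col hk m R v).val + 1) := by
  by_cases h : (col hk m R v).val + 1 < k
  · by_contra hc
    push_neg at hc
    have := col_max hk m R v ⟨(col hk m R v).val + 1, h⟩ hc
    rw [Fin.le_def] at this
    simp at this
  · have hklast : (col hk m R v).val + 1 = k := by
      have := (col hk m R v).isLt
      omega
    calc v.val < R := v.isLt
    _ ≤ offN m (m ⟨0, hk⟩) k := hR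
    _ = offN m (m ⟨0, hk⟩) ((col hk m R v).val + 1) := by rw [hklast]

lemma col_zero_iff (hpos : ∀ i, 0 < m i) (hR : R ≤ offN m (m ⟨0, hk⟩) k) (v : Fin R) :
    col hk m R v = ⟨0, hk⟩ → v.val < 2 * m ⟨0, hk⟩ := by
  intro h
  have := col_ub hk m R hpos hR v
  rw [h] at this
  simpa [offN_succ, offN_zero, szN, hk] using this

lemma col_block_card (hpos : ∀ i, 0 < m i) (hR : R ≤ offN m (m ⟨0, hk⟩) k)
    (i : Fin k) (hi : i ≠ ⟨0, hk⟩) :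
    (Finset.univ.filter fun v : Fin R => col hk m R v = i).card ≤ m i - 1 := by
  have hsz : szN m (m ⟨0, hk⟩) i.val = m i - 1 := by
    rw [szN, dif_pos i.isLt, if_neg (fun hv => hi (Fin.ext hv))]
  calc (Finset.univ.filter fun v : Fin R => col hk m R v = i).card
      ≤ (Finset.Ico (offN m (m ⟨0, hk⟩) i.val)
          (offN m (m ⟨0, hk⟩) i.val + (m i - 1))).card := by
        apply Finset.card_le_card_of_injOn (fun v => v.val)
        · intro v hv
          simp only [Finset.mem_coe, Finset.mem_filter, Finset.mem_univ, true_and] at hv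
          have h1 := col_le hk m R v
          have h2 := col_ub hk m R hpos hR v
          rw [hv] at h1 h2
          rw [offN_succ, hsz] at h2
          simp only [Finset.mem_coe, Finset.mem_Ico]
          exact ⟨h1, h2⟩
        · intro a _ b _ hab
          exact Fin.ext hab
    _ = m i - 1 := by rw [Nat.card_Ico]; omega

lemma cc_attains (a b : Fin R) (i : Fin k) (h : cc hk m R s(a, b) = i) :
    col hk m R a = i ∨ col hk m R b = i := by
  rw [cc_mk] at h
  rcases max_choice (col hk m R a) (col hk m R b) with hm | hm <;> rw [hm] at h
  · exact Or.inl h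
  · exact Or.inr h

lemma cc_zero (a b : Fin R) (h : cc hk m R s(a, b) = ⟨0, hk⟩) :
    col hk m R a = ⟨0, hk⟩ ∧ col hk m R b = ⟨0, hk⟩ := by
  rw [cc_mk] at h
  constructor
  · exact le_antisymm (h ▸ le_max_left _ _) (Fin.mk_le_of_le_val (Nat.zero_le _))
  · exact le_antisymm (h ▸ le_max_right _ _) (Fin.mk_le_of_le_val (Nat.zero_le _))

/-- colours other than `0` see no monochromatic copy. -/
lemma count_pos_empty (hpos : ∀ i, 0 < m i) (hR : R ≤ offN m (m ⟨0, hk⟩) k)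
    (i : Fin k) (hi : i ≠ ⟨0, hk⟩) :
    {S | S ∈ copies (nK2 (m i)) R ∧ ∀ e ∈ S, cc hk m R e = i} = ∅ := by
  rw [Set.eq_empty_iff_forall_notMem]
  rintro S ⟨⟨F, hFinj, rfl⟩, hmono⟩
  set g : Fin (m i) → Fin R := fun j => if col hk m R (F (j, 0)) = i then F (j, 0) else F (j, 1)
    with hg
  have hgt : ∀ j, ∃ t, g j = F (j, t) := by
    intro j
    by_cases h : col hk m R (F (j, 0)) = i
    · exact ⟨0, by rw [hg]; simp [h]⟩
    · exact ⟨1, by rw [hg]; simp [h]⟩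
  have hedge : ∀ j : Fin (m i), s(F (j, 0), F (j, 1)) ∈ Sym2.map F '' (nK2 (m i)).edgeSet := by
    intro j
    exact ⟨s((j, 0), (j, 1)), nK2_edge.2 ⟨j, rfl⟩, by rw [Sym2.map_pair_eq]⟩
  have hcolg : ∀ j, col hk m R (g j) = i := by
    intro j
    have h := hmono _ (hedge j)
    rcases cc_attains hk m R _ _ i h with hc | hc
    · rw [hg]; simpa [hc] using hc
    · rw [hg]
      by_cases h0 : col hk m R (F (j, 0)) = i
      · simpa [h0] using h0
      · simpa [h0] using hc
  have hginj : Function.Injective g := by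
    intro j j' heq
    obtain ⟨t, ht⟩ := hgt j
    obtain ⟨t', ht'⟩ := hgt j'
    rw [ht, ht'] at heq
    have := hFinj heq
    exact congrArg Prod.fst this
  have hcard : m i ≤ (Finset.univ.filter fun v : Fin R => col hk m R v = i).card := by
    calc m i = (Finset.univ : Finset (Fin (m i))).card := by simp
    _ ≤ _ := by
      apply Finset.card_le_card_of_injOn g
      · intro j _
        simp only [Finset.mem_coe, Finset.mem_filter, Finset.mem_univ, true_and]
        exact hcolg j
      · intro a _ b _ hab
        exact hginj hab
  have := col_block_card hk m R hpos hR i hi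
  have := hpos i
  omega

end Coloring

end CLF



namespace CLF

open GR CLM Nat

attribute [local instance] Classical.propDecidable

variable {k : ℕ}

lemma CL_mem (hk : 0 < k) (m : Fin k → ℕ) (hpos : ∀ i, 0 < m i)
    (hdec : ∀ i j : Fin k, i ≤ j → m j ≤ m i) :
    ∀ c : Sym2 (Fin (m ⟨0, hk⟩ + 1 + ∑ i, (m i - 1))) → Fin k,
      ∃ i : Fin k, ∃ S ∈ copies (nK2 (m i)) (m ⟨0, hk⟩ + 1 + ∑ i, (m i - 1)),
        ∀ e ∈ S, c e = i := by
  intro c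
  by_contra hno
  push_neg at hno
  have hnu : ∀ i : Fin k, nu (cg c i (Finset.univ :
      Finset (Fin (m ⟨0, hk⟩ + 1 + ∑ i, (m i - 1))))) ≤ 2 * m i - 2 := by
    intro i
    by_contra h
    push_neg at h
    obtain ⟨a, ha⟩ := nu_even (cg c i (Finset.univ :
      Finset (Fin (m ⟨0, hk⟩ + 1 + ∑ i, (m i - 1)))))
    have h2 : 2 * m i ≤ nu (cg c i (Finset.univ :
        Finset (Fin (m ⟨0, hk⟩ + 1 + ∑ i, (m i - 1))))) := by
      have := hpos i
      omega
    obtain ⟨f, hf, hfeta⟩ := exists_max_matching (cg c i (Finset.univ :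
      Finset (Fin (m ⟨0, hk⟩ + 1 + ∑ i, (m i - 1)))))
    obtain ⟨S, hS, hmono⟩ := copy_of_nu (hpos i) hf (by omega)
    obtain ⟨e, he, hne⟩ := hno i S hS
    exact hne (hmono e he)
  have hmain := main c (Finset.univ : Finset (Fin (m ⟨0, hk⟩ + 1 + ∑ i, (m i - 1))))
  rw [Finset.card_univ, Fintype.card_fin] at hmain
  have hsup : (Finset.univ.sup fun i => nu (cg c i (Finset.univ :
      Finset (Fin (m ⟨0, hk⟩ + 1 + ∑ i, (m i - 1))))))
      ≤ 2 * m ⟨0, hk⟩ - 2 := by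
    apply Finset.sup_le
    intro i _
    refine (hnu i).trans ?_
    have hle : m i ≤ m ⟨0, hk⟩ := hdec ⟨0, hk⟩ i (by
      rw [Fin.le_def]; simp)
    omega
  have hsum : (∑ i, nu (cg c i (Finset.univ :
      Finset (Fin (m ⟨0, hk⟩ + 1 + ∑ i, (m i - 1))))))
      ≤ ∑ i, (2 * (m i - 1)) := by
    apply Finset.sum_le_sum
    intro i _
    have := hpos i
    have := hnu i
    omega
  rw [← Finset.mul_sum] at hsum
  have hm0 : 0 < m ⟨0, hk⟩ := hpos _
  omega

lemma count_bound (n R : ℕ) (P : Set (Sym2 (Fin R)) → Prop)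
    (hwit : ∀ S, S ∈ copies (nK2 n) R → P S → ∃ F : Fin n × Fin 2 → Fin R,
        Function.Injective F ∧ (∀ p, (F p).val < 2 * n) ∧
          S = Sym2.map F '' (nK2 n).edgeSet) :
    Set.ncard {S | S ∈ copies (nK2 n) R ∧ P S} ≤ (2 * n)! / (2 ^ n * n !) := by
  classical
  set T : Set (Set (Sym2 (Fin R))) := {S | S ∈ copies (nK2 n) R ∧ P S} with hT
  -- witness choice
  have hwit' : ∀ x : T, ∃ F : Fin n × Fin 2 → Fin R,
      Function.Injective F ∧ (∀ p, (F p).val < 2 * n) ∧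
        (x : Set (Sym2 (Fin R))) = Sym2.map F '' (nK2 n).edgeSet :=
    fun x => hwit x.1 x.2.1 x.2.2
  choose W hW1 hW2 hW3 using hwit'
  -- the group of relabelings
  set G := Equiv.Perm (Fin n) × (Fin n → Equiv.Perm (Fin 2)) with hG
  set rho : G → (Fin n × Fin 2 → Fin n × Fin 2) :=
    fun g p => (g.1 p.1, g.2 p.1 p.2) with hrho
  have hrho_inj : ∀ g : G, Function.Injective (rho g) := by
    rintro g ⟨j, t⟩ ⟨j', t'⟩ h
    have h1 : g.1 j = g.1 j' := congrArg Prod.fst h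
    have h2 : j = j' := g.1.injective h1
    subst h2
    have h3 : g.2 j t = g.2 j t' := congrArg Prod.snd h
    rw [(g.2 j).injective h3]
  have hsub : ∀ g : G, Sym2.map (rho g) '' (nK2 n).edgeSet ⊆ (nK2 n).edgeSet := by
    rintro g e ⟨e₀, he₀, rfl⟩
    obtain ⟨j, rfl⟩ := nK2_edge.1 he₀
    rw [Sym2.map_pair_eq]
    have hval : rho g (j, 0) = (g.1 j, g.2 j 0) := rfl
    have hval' : rho g (j, 1) = (g.1 j, g.2 j 1) := rfl
    rw [hval, hval']
    have hne : g.2 j 0 ≠ g.2 j 1 := fun h => by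
      have := (g.2 j).injective h
      simp at this
    have h0 : g.2 j 0 = 0 ∨ g.2 j 0 = 1 := by omega
    apply nK2_edge.2
    rcases h0 with h0 | h0
    · have h1 : g.2 j 1 = 1 := by omega
      exact ⟨g.1 j, by rw [h0, h1]⟩
    · have h1 : g.2 j 1 = 0 := by omega
      refine ⟨g.1 j, ?_⟩
      rw [h0, h1, Sym2.eq_swap]
  have hinvmap : ∀ g : G, Sym2.map (rho g) '' (nK2 n).edgeSet = (nK2 n).edgeSet := by
    intro g
    refine le_antisymm (hsub g) ?_
    intro e he
    set ginv : G := (g.1.symm, fun j => (g.2 (g.1.symm j)).symm) with hginv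
    refine ⟨Sym2.map (rho ginv) e, hsub ginv ⟨e, he, rfl⟩, ?_⟩
    rw [Sym2.map_map]
    have : rho g ∘ rho ginv = id := by
      funext p
      show rho g (rho ginv p) = p
      rcases p with ⟨j, t⟩
      show (g.1 (g.1.symm j), g.2 (g.1.symm j) ((g.2 (g.1.symm j)).symm t)) = (j, t)
      rw [Equiv.apply_symm_apply, Equiv.apply_symm_apply]
    rw [this, Sym2.map_id]
    rfl
  -- the injection
  set D := {F : Fin n × Fin 2 → Fin R // Function.Injective F ∧ ∀ p, (F p).val < 2 * n}
    with hD
  set Theta : T × G → D := fun x =>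
    ⟨W x.1 ∘ rho x.2, (hW1 x.1).comp (hrho_inj x.2), fun p => hW2 x.1 (rho x.2 p)⟩ with hTheta
  have hrecover : ∀ x : T × G,
      Sym2.map (W x.1 ∘ rho x.2) '' (nK2 n).edgeSet = (x.1 : Set (Sym2 (Fin R))) := by
    rintro ⟨x, g⟩
    have hcomp : Sym2.map (W x ∘ rho g) '' (nK2 n).edgeSet
        = Sym2.map (W x) '' (Sym2.map (rho g) '' (nK2 n).edgeSet) := by
      rw [← Set.image_comp]
      apply Set.image_congr
      intro e _
      show Sym2.map (W x ∘ rho g) e = Sym2.map (W x) (Sym2.map (rho g) e)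
      rw [Sym2.map_map]
    rw [hcomp, hinvmap g, ← hW3 x]
  have hTheta_inj : Function.Injective Theta := by
    rintro ⟨x, g⟩ ⟨x', g'⟩ heq
    have hfun : W x ∘ rho g = W x' ∘ rho g' := congrArg Subtype.val heq
    have hxx : (x : Set (Sym2 (Fin R))) = (x' : Set (Sym2 (Fin R))) := by
      rw [← hrecover (x, g), ← hrecover (x', g')]
      show Sym2.map (W x ∘ rho g) '' _ = Sym2.map (W x' ∘ rho g') '' _
      rw [hfun]
    have hx : x = x' := Subtype.ext hxx
    subst hx
    have hrr : rho g = rho g' := by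
      funext p
      exact hW1 x (congrFun hfun p)
    have hg : g = g' := by
      have hsigma : g.1 = g'.1 := by
        apply Equiv.ext
        intro j
        have := congrFun hrr (j, 0)
        exact congrArg Prod.fst this
      have heps : g.2 = g'.2 := by
        funext j
        apply Equiv.ext
        intro t
        have := congrFun hrr (j, t)
        exact congrArg Prod.snd this
      exact Prod.ext hsigma heps
    rw [hg]
  -- cardinalities
  have hTfin : T.Finite := Set.toFinite T
  have hG1 : Nat.card (Equiv.Perm (Fin n)) = n ! := by
    rw [Nat.card_eq_fintype_card, Fintype.card_perm, Fintype.card_fin]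
  have hG2 : Nat.card (Fin n → Equiv.Perm (Fin 2)) = 2 ^ n := by
    rw [Nat.card_eq_fintype_card, Fintype.card_fun, Fintype.card_perm, Fintype.card_fin]
    norm_num
  have hcard1 : Nat.card (T × G) = T.ncard * (n ! * 2 ^ n) := by
    rw [Nat.card_prod, Nat.card_coe_set_eq, hG, Nat.card_prod, hG1, hG2]
  have hcard2 : Nat.card D ≤ (2 * n)! := by
    have hPsi : ∃ Psi : D → (Fin n × Fin 2 ↪ Fin (2 * n)), Function.Injective Psi := by
      refine ⟨fun F => ⟨fun p => ⟨(F.1 p).val, F.2.2 p⟩, ?_⟩, ?_⟩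
      · intro p q h
        apply F.2.1
        apply Fin.ext
        have h' : (⟨(F.1 p).val, F.2.2 p⟩ : Fin (2*n)) = ⟨(F.1 q).val, F.2.2 q⟩ := h
        exact Fin.mk.inj h'
      · intro F F' h
        apply Subtype.ext
        funext p
        have h2 := congrFun (congrArg (fun (e : Fin n × Fin 2 ↪ Fin (2*n)) =>
          (e : Fin n × Fin 2 → Fin (2*n))) h) p
        have h3 : (⟨(F.1 p).val, F.2.2 p⟩ : Fin (2*n)) = ⟨(F'.1 p).val, F'.2.2 p⟩ := h2
        exact Fin.ext (Fin.mk.inj h3)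
    obtain ⟨Psi, hPsi_inj⟩ := hPsi
    calc Nat.card D ≤ Nat.card (Fin n × Fin 2 ↪ Fin (2 * n)) :=
          Nat.card_le_card_of_injective Psi hPsi_inj
    _ = (2 * n)! := by
        rw [Nat.card_eq_fintype_card, Fintype.card_embedding_eq]
        simp only [Fintype.card_prod, Fintype.card_fin]
        rw [mul_comm n 2, Nat.descFactorial_self]
  have hmain : T.ncard * (n ! * 2 ^ n) ≤ (2 * n)! := by
    rw [← hcard1]
    exact (Nat.card_le_card_of_injective Theta hTheta_inj).trans hcard2
  rw [Nat.le_div_iff_mul_le (by positivity)]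
  calc T.ncard * (2 ^ n * n !) = T.ncard * (n ! * 2 ^ n) := by ring
  _ ≤ (2 * n)! := hmain

end CLF


open GR Nat in
/-- The Ramsey multiplicity of matchings is at most `(2n₁)!/(2^{n₁} n₁!)`. -/
theorem ramsey_multiplicity_matchings {k : ℕ} (hk : 0 < k) (m : Fin k → ℕ)
    (hpos : ∀ i, 0 < m i) (hdec : ∀ i j : Fin k, i ≤ j → m j ≤ m i) :
    sInf {t | ∃ c : Sym2 (Fin (sInf {r | ∀ c : Sym2 (Fin r) → Fin k,
          ∃ i : Fin k, ∃ S ∈ copies (nK2 (m i)) r, ∀ e ∈ S, c e = i})) → Fin k,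
        t = ∑ i : Fin k,
          Set.ncard {S | S ∈ copies (nK2 (m i)) _ ∧ ∀ e ∈ S, c e = i}}
      ≤ (2 * m ⟨0, hk⟩)! / (2 ^ (m ⟨0, hk⟩) * (m ⟨0, hk⟩)!) := by
  classical
  have hmem : (m ⟨0, hk⟩ + 1 + ∑ i, (m i - 1)) ∈ {r | ∀ c : Sym2 (Fin r) → Fin k,
      ∃ i : Fin k, ∃ S ∈ copies (nK2 (m i)) r, ∀ e ∈ S, c e = i} :=
    CLF.CL_mem hk m hpos hdec
  have hRN : sInf {r | ∀ c : Sym2 (Fin r) → Fin k,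
      ∃ i : Fin k, ∃ S ∈ copies (nK2 (m i)) r, ∀ e ∈ S, c e = i}
      ≤ m ⟨0, hk⟩ + 1 + ∑ i, (m i - 1) := Nat.sInf_le hmem
  set R := sInf {r | ∀ c : Sym2 (Fin r) → Fin k,
      ∃ i : Fin k, ∃ S ∈ copies (nK2 (m i)) r, ∀ e ∈ S, c e = i} with hRdef
  have hRoff : R ≤ CLF.offN m (m ⟨0, hk⟩) k := by
    rw [CLF.offN_total hk m hpos]
    exact hRN
  refine le_trans (Nat.sInf_le ⟨CLF.cc hk m R, rfl⟩) ?_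
  rw [Finset.sum_eq_single (⟨0, hk⟩ : Fin k)]
  · -- main bound for colour 0
    apply CLF.count_bound (m ⟨0, hk⟩) R
      (fun S => ∀ e ∈ S, CLF.cc hk m R e = ⟨0, hk⟩)
    rintro S ⟨F, hFinj, rfl⟩ hmono
    refine ⟨F, hFinj, ?_, rfl⟩
    rintro ⟨j, t⟩
    have hedge : s(F (j, 0), F (j, 1)) ∈ Sym2.map F '' (nK2 (m ⟨0, hk⟩)).edgeSet :=
      ⟨s((j, 0), (j, 1)), CLM.nK2_edge.2 ⟨j, rfl⟩, by rw [Sym2.map_pair_eq]⟩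
    have hcc := hmono _ hedge
    obtain ⟨h0, h1⟩ := CLF.cc_zero hk m R _ _ hcc
    have hb0 := CLF.col_zero_iff hk m R hpos hRoff _ h0
    have hb1 := CLF.col_zero_iff hk m R hpos hRoff _ h1
    rcases CLM.fin2_cases t with rfl | rfl
    · exact hb0
    · exact hb1
  · intro b _ hb
    rw [CLF.count_pos_empty hk m R hpos hRoff b hb, Set.ncard_empty]
  · intro h
    exact absurd (Finset.mem_univ _) h
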